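/- For x > 1, let X = x³ and define the 3×3 real matrices A(x) = [[0,1,0],[0,0,1],[−1,x,x²]], T(x) = [[1+3x^{−3}, 1, 1],[x²+3x^{−4}, x^{−1}, −x^{−1}],[x⁴−x, 0, 2x^{−2}]], Λ(x) = diag(X−3, 1, −1), and R(x) = 3·[[−(X−1)^{−1}, 0, 2(X²−1)^{−1}],[4(X−1)^{−1}+4X^{−1}, 0, −(X−1)^{−1}−6X^{−1}(X²−1)^{−1}],[0, 0, (X+1)^{−1}]]. Then for all x > 1, T'(x) = A(x)·T(x) − T(x)·x^{−1}(Λ(x) + R(x)); consequently, if Z : (1,∞) → ℝ³ is differentiable and satisfies Z'(x) = x^{−1}(Λ(x) + R(x))·Z(x), then Y(x) = T(x)·Z(x) satisfies Y'(x) = A(x)·Y(x). -/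

import Mathlib

open Matrix

attribute [local instance] Matrix.normedAddCommGroup Matrix.normedSpace

/-- Companion matrix of `y''' − x²y'' − xy' + y = 0`. -/
noncomputable def Amat (x : ℝ) : Matrix (Fin 3) (Fin 3) ℝ :=
  !![0, 1, 0; 0, 0, 1; -1, x, x ^ 2]

/-- The transforming matrix `T(x)` of equation (6.5). -/
noncomputable def Tmat (x : ℝ) : Matrix (Fin 3) (Fin 3) ℝ :=
  !![1 + 3 * x ^ (-3 : ℤ), 1, 1;
     x ^ 2 + 3 * x ^ (-4 : ℤ), x⁻¹, -x⁻¹;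
     x ^ 4 - x, 0, 2 * x ^ (-2 : ℤ)]

/-- The diagonal part `Λ(x) = diag(X − 3, 1, −1)` with `X = x³`. -/
noncomputable def Lmat (x : ℝ) : Matrix (Fin 3) (Fin 3) ℝ :=
  Matrix.diagonal ![x ^ 3 - 3, 1, -1]

/-- The perturbation matrix `R(x)` with `X = x³`. -/
noncomputable def Rmat (x : ℝ) : Matrix (Fin 3) (Fin 3) ℝ :=
  (3 : ℝ) •
    !![-(x ^ 3 - 1)⁻¹, 0, 2 * ((x ^ 3) ^ 2 - 1)⁻¹;
       4 * (x ^ 3 - 1)⁻¹ + 4 * (x ^ 3)⁻¹, 0,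
         -(x ^ 3 - 1)⁻¹ - 6 * (x ^ 3)⁻¹ * ((x ^ 3) ^ 2 - 1)⁻¹;
       0, 0, (x ^ 3 + 1)⁻¹]

/-- The explicit entrywise derivative of `Tmat`. -/
noncomputable def Tder (x : ℝ) : Matrix (Fin 3) (Fin 3) ℝ :=
  !![-9 * x ^ (-4 : ℤ), 0, 0;
     2 * x - 12 * x ^ (-5 : ℤ), -(x ^ 2)⁻¹, (x ^ 2)⁻¹;
     4 * x ^ 3 - 1, 0, -4 * x ^ (-3 : ℤ)]

lemma Tmat_hasDerivAt (x : ℝ) (hx : x ≠ 0) : HasDerivAt Tmat (Tder x) x := by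
  rw [show Tmat = fun x => Tmat x from rfl]
  apply hasDerivAt_pi.2
  intro i
  apply hasDerivAt_pi.2
  intro j
  fin_cases i <;> fin_cases j <;> simp [Tmat, Tder]
  · have := ((hasDerivAt_zpow (-3) x (Or.inl hx)).const_mul 3)
    convert this using 1
    · rfl
    all_goals push_cast <;> ring_nf <;> norm_num [_root_.zpow_neg]
  · exact hasDerivAt_const x 1
  · exact hasDerivAt_const x 1
  · have := (hasDerivAt_pow 2 x).fun_add ((hasDerivAt_zpow (-4) x (Or.inl hx)).const_mul 3)
    convert this using 1 <;> push_cast <;> ring_nf <;> norm_num [_root_.zpow_neg]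
  · exact hasDerivAt_inv hx
  · have := (hasDerivAt_inv hx).fun_neg
    convert this using 1 <;> push_cast <;> ring_nf <;> norm_num [_root_.zpow_neg]
  · have := (hasDerivAt_pow 4 x).fun_sub (hasDerivAt_id' x)
    convert this using 1 <;> push_cast <;> ring_nf <;> norm_num [_root_.zpow_neg]
  · exact hasDerivAt_const x 0
  · have := (hasDerivAt_zpow (-2) x (Or.inl hx)).const_mul 2
    convert this using 1
    · rfl
    all_goals push_cast <;> ring_nf <;> norm_num [_root_.zpow_neg]

lemma Lmat_eq (x : ℝ) : Lmat x = !![x ^ 3 - 3, 0, 0; 0, 1, 0; 0, 0, -1] := by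
  ext i j
  fin_cases i <;> fin_cases j <;>
    simp [Lmat, Matrix.diagonal, Matrix.vecHead, Matrix.vecTail]

set_option maxHeartbeats 1000000 in
lemma Tder_eq (x : ℝ) (hx : 1 < x) :
    Amat x * Tmat x - Tmat x * (x⁻¹ • (Lmat x + Rmat x)) = Tder x := by
  have hx0 : x ≠ 0 := by positivity
  have hX : 1 < x ^ 3 := one_lt_pow₀ hx (by norm_num)
  have h1 : x ^ 3 - 1 ≠ 0 := ne_of_gt (by linarith)
  have h2 : x ^ 3 + 1 ≠ 0 := ne_of_gt (by linarith)
  have h3 : (x ^ 3) ^ 2 - 1 ≠ 0 := by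
    have : 1 < (x ^ 3) ^ 2 := one_lt_pow₀ hX (by norm_num)
    exact ne_of_gt (by linarith)
  have h4 : -1 + x ^ 6 ≠ 0 := by rw [← pow_mul] at h3; rwa [neg_add_eq_sub]
  rw [Lmat_eq]
  ext i j
  fin_cases i <;> fin_cases j <;>
    simp only [Amat, Tmat, Rmat, Tder, Matrix.sub_apply, Matrix.mul_apply,
      Fin.sum_univ_three, Matrix.smul_apply, Matrix.add_apply,
      Matrix.of_apply, Matrix.cons_val', Matrix.cons_val_zero, Matrix.cons_val_one,
      Matrix.head_cons, Matrix.empty_val', Matrix.cons_val_fin_one, Matrix.head_fin_const,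
      Matrix.cons_val_two, Matrix.tail_cons, smul_eq_mul, _root_.zpow_neg,
      Fin.mk_zero, Fin.mk_one, Fin.reduceFinMk, zpow_ofNat] <;>
    field_simp <;>
    ring_nf <;> field_simp <;> ring

/-- The change of variable `Y = T(x)Z` takes `Z' = x⁻¹(Λ + R)Z` into `Y' = A(x)Y`:
`T' = A·T − T·x⁻¹(Λ + R)` on `(1,∞)`, and consequently any solution `Z` of the
transformed system yields a solution `Y = T·Z` of the original system. -/
theorem transformation_conjugates_systems :
    (∀ x : ℝ, 1 < x →
      HasDerivAt Tmat (Amat x * Tmat x - Tmat x * (x⁻¹ • (Lmat x + Rmat x))) x) ∧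
    ∀ Z : ℝ → Fin 3 → ℝ,
      (∀ x : ℝ, 1 < x → HasDerivAt Z (x⁻¹ • ((Lmat x + Rmat x).mulVec (Z x))) x) →
      ∀ x : ℝ, 1 < x →
        HasDerivAt (fun t => (Tmat t).mulVec (Z t))
          ((Amat x).mulVec ((Tmat x).mulVec (Z x))) x := by
  have main : ∀ x : ℝ, 1 < x →
      HasDerivAt Tmat (Amat x * Tmat x - Tmat x * (x⁻¹ • (Lmat x + Rmat x))) x := by
    intro x hx
    rw [Tder_eq x hx]
    exact Tmat_hasDerivAt x (by positivity)
  refine ⟨main, ?_⟩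
  intro Z hZ x hx
  have hT := main x hx
  set M := x⁻¹ • (Lmat x + Rmat x) with hM
  have hTij : ∀ i j, HasDerivAt (fun t => Tmat t i j)
      ((Amat x * Tmat x - Tmat x * M) i j) x := fun i j =>
    hasDerivAt_pi.1 (hasDerivAt_pi.1 hT i) j
  have hZj : ∀ j, HasDerivAt (fun t => Z t j)
      ((x⁻¹ • ((Lmat x + Rmat x).mulVec (Z x))) j) x := hasDerivAt_pi.1 (hZ x hx)
  have key : HasDerivAt (fun t => (Tmat t).mulVec (Z t))
      ((Amat x * Tmat x - Tmat x * M).mulVec (Z x) +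
        (Tmat x).mulVec (x⁻¹ • ((Lmat x + Rmat x).mulVec (Z x)))) x := by
    apply hasDerivAt_pi.2
    intro i
    have h : HasDerivAt (fun t => ∑ j, Tmat t i j * Z t j)
        (∑ j, ((Amat x * Tmat x - Tmat x * M) i j * Z x j +
          Tmat x i j * (x⁻¹ • ((Lmat x + Rmat x).mulVec (Z x))) j)) x :=
      HasDerivAt.fun_sum fun j _ => (hTij i j).mul (hZj j)
    convert h using 1
    · rfl
    · rfl
    all_goals simp [Matrix.mulVec, dotProduct, Finset.sum_add_distrib]
  convert key using 1
  rw [Matrix.sub_mulVec, ← Matrix.mulVec_mulVec, ← Matrix.mulVec_mulVec, hM,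
    Matrix.smul_mulVec, Matrix.mulVec_smul]
  abel
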